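/- There exists N such that for all n ≥ N, the vertex 1 belongs to A(G_n) in the Gallai–Edmonds decomposition of the divisibility graph G_n: every maximum matching of G_n covers the vertex 1, and there exists a vertex m ∈ {1, ..., n} adjacent to 1 (i.e., m ≠ 1) that is not covered by some maximum matching of G_n. -/
import Mathlib


/-- `M` is a matching of `G`: a set of edges of `G`, no two of which share a vertex. -/
def IsMatching {V : Type*} (G : SimpleGraph V) (M : Finset (Sym2 V)) : Prop :=
  (∀ e ∈ M, e ∈ G.edgeSet) ∧
  ∀ e ∈ M, ∀ f ∈ M, e ≠ f → ∀ v : V, v ∈ e → v ∉ f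

/-- The vertex `v` is covered by the matching `M`, i.e. it is an endpoint of an edge of `M`. -/
def Covers {V : Type*} (M : Finset (Sym2 V)) (v : V) : Prop := ∃ e ∈ M, v ∈ e

/-- `M` is a maximum matching of `G`: a matching of maximum cardinality among all matchings. -/
def IsMaximumMatching {V : Type*} (G : SimpleGraph V) (M : Finset (Sym2 V)) : Prop :=
  IsMatching G M ∧ ∀ M' : Finset (Sym2 V), IsMatching G M' → M'.card ≤ M.card

/-- The snake-in-the-box winning predicate: `Win G S v` means the player about to move from
the position with visited set `S` and current vertex `v ∈ S` has a winning strategy.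
`Win G S v` holds iff there is `w` adjacent to `v`, not yet visited, with `¬ Win G (insert w S) w`. -/
def Win {V : Type*} [Fintype V] [DecidableEq V] (G : SimpleGraph V) (S : Finset V) (v : V) :
    Prop :=
  ∃ w : V, ∃ _ : G.Adj v w, ∃ _ : w ∉ S, ¬ Win G (insert w S) w
termination_by Sᶜ.card
decreasing_by
  simp only [Finset.compl_insert]
  exact Finset.card_erase_lt_of_mem (Finset.mem_compl.mpr (by assumption))

/-- The divisibility graph on `{1, …, n}`: distinct `i, j` are adjacent iff `i ∣ j` or `j ∣ i`. -/
def divGraph (n : ℕ) : SimpleGraph {m : ℕ // m ∈ Finset.Icc 1 n} :=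
  SimpleGraph.fromRel (fun i j => (i : ℕ) ∣ (j : ℕ) ∨ (j : ℕ) ∣ (i : ℕ))

open Finset

lemma divGraph_adj {n : ℕ} (v w : {k : ℕ // k ∈ Finset.Icc 1 n}) :
    (divGraph n).Adj v w ↔ v ≠ w ∧ ((v : ℕ) ∣ (w : ℕ) ∨ (w : ℕ) ∣ (v : ℕ)) := by
  simp only [divGraph, SimpleGraph.fromRel_adj]
  tauto

lemma exists_maximum_matching {n : ℕ} :
    ∃ M, IsMaximumMatching (divGraph n) M := by
  classical
  haveI : Fintype {k : ℕ // k ∈ Finset.Icc 1 n} := FinsetCoe.fintype _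
  obtain ⟨M, hMmem, hmax⟩ := Finset.exists_max_image
    (univ.filter (fun M => IsMatching (divGraph n) M)) Finset.card
    ⟨∅, by simp [IsMatching]⟩
  refine ⟨M, (mem_filter.mp hMmem).2, fun M' hM' => hmax M' (mem_filter.mpr ⟨mem_univ _, hM'⟩)⟩

lemma exists_uncovered {n : ℕ} (hn : 100 ≤ n)
    (M : Finset (Sym2 {k : ℕ // k ∈ Finset.Icc 1 n}))
    (hM : IsMatching (divGraph n) M) :
    ∃ s : {k : ℕ // k ∈ Finset.Icc 1 n},
      (s : ℕ) % 2 = 1 ∧ n < 2 * (s : ℕ) ∧ ¬ Covers M s := by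
  classical
  haveI : Fintype {k : ℕ // k ∈ Finset.Icc 1 n} := FinsetCoe.fintype _
  by_contra hcon
  push_neg at hcon
  set S : Finset {k : ℕ // k ∈ Finset.Icc 1 n} :=
    univ.filter (fun v => (v : ℕ) % 2 = 1 ∧ n < 2 * (v : ℕ)) with hSdef
  set T : Finset {k : ℕ // k ∈ Finset.Icc 1 n} :=
    univ.filter (fun v => (v : ℕ) % 2 = 1 ∧ 3 * (v : ℕ) ≤ n) with hTdef
  set f : {k : ℕ // k ∈ Finset.Icc 1 n} → {k : ℕ // k ∈ Finset.Icc 1 n} :=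
    fun s => if h : Covers M s then Sym2.Mem.other h.choose_spec.2 else s with hfdef
  have key : ∀ s ∈ S, ∃ e ∈ M, s ∈ e ∧ f s ∈ e ∧ f s ∈ T := by
    intro s hs
    rw [hSdef, mem_filter] at hs
    obtain ⟨-, hodd, hbig⟩ := hs
    have hc : Covers M s := hcon s hodd hbig
    obtain ⟨he, hse⟩ := hc.choose_spec
    have hfs : f s = Sym2.Mem.other hc.choose_spec.2 := dif_pos hc
    set t := Sym2.Mem.other hc.choose_spec.2 with htdef
    have hte : t ∈ hc.choose := Sym2.other_mem _
    have hedge : hc.choose ∈ (divGraph n).edgeSet := hM.1 _ he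
    have hadj : (divGraph n).Adj s t := by
      rw [← Sym2.other_spec hc.choose_spec.2] at hedge
      exact hedge
    rw [divGraph_adj] at hadj
    obtain ⟨hne, hdvd⟩ := hadj
    have ht1 : 1 ≤ (t : ℕ) := (mem_Icc.mp t.2).1
    have htn : (t : ℕ) ≤ n := (mem_Icc.mp t.2).2
    have hsn : (s : ℕ) ≤ n := (mem_Icc.mp s.2).2
    have hs1 : 1 ≤ (s : ℕ) := (mem_Icc.mp s.2).1
    have hnev : (t : ℕ) ≠ (s : ℕ) := fun h => hne (Subtype.ext h.symm)
    have htprop : (t : ℕ) % 2 = 1 ∧ 3 * (t : ℕ) ≤ n := by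
      rcases hdvd with hst | hts
      · exfalso
        obtain ⟨k, hk⟩ := hst
        rcases k with _ | _ | k
        · omega
        · omega
        · nlinarith
      · obtain ⟨k, hk⟩ := hts
        have hk1 : k ≠ 1 := by rintro rfl; omega
        have hkodd : k % 2 = 1 ∧ (t : ℕ) % 2 = 1 := by
          rcases Nat.mod_two_eq_zero_or_one k with h | h <;>
            rcases Nat.mod_two_eq_zero_or_one (t : ℕ) with h' | h' <;>
            · constructor <;> first
              | assumption
              | (exfalso; rw [hk, Nat.mul_mod, h', h] at hodd; simp at hodd)
        have hk3 : 3 ≤ k := by omega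
        refine ⟨hkodd.2, ?_⟩
        calc 3 * (t : ℕ) ≤ (t : ℕ) * k := by nlinarith
        _ = (s : ℕ) := hk.symm
        _ ≤ n := hsn
    refine ⟨hc.choose, he, hse, ?_, ?_⟩
    · rw [hfs]; exact hte
    · rw [hfs, hTdef, mem_filter]; exact ⟨mem_univ _, htprop⟩
  have hinj : Set.InjOn f ↑S := by
    intro s1 hs1' s2 hs2' heq
    have hs1 : s1 ∈ S := hs1'
    have hs2 : s2 ∈ S := hs2'
    obtain ⟨e1, he1, hs1e, hf1e, hf1T⟩ := key s1 hs1
    obtain ⟨e2, he2, hs2e, hf2e, hf2T⟩ := key s2 hs2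
    rw [hSdef, mem_filter] at hs1 hs2
    rw [hTdef, mem_filter] at hf1T hf2T
    have hee : e1 = e2 := by
      by_contra hne
      exact hM.2 e1 he1 e2 he2 hne (f s1) hf1e (heq ▸ hf2e)
    have hs1ne : s1 ≠ f s1 := by
      intro h
      have h1 := hf1T.2
      rw [← h] at h1
      have h2 := hs1.2
      omega
    have hs2ne : s2 ≠ f s2 := by
      intro h
      have h1 := hf2T.2
      rw [← h] at h1
      have h2 := hs2.2
      omega
    rw [hee] at hs1e
    rw [heq] at hf1e hs1ne
    -- now s1, s2, f s2 ∈ e2, s1 ≠ f s2, s2 ≠ f s2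
    induction e2 using Sym2.inductionOn with
    | hf a b =>
      rw [Sym2.mem_iff] at hs1e hs2e hf2e
      rcases hs1e with rfl | rfl
      · rcases hs2e with h | h
        · exact h.symm
        · subst h
          rcases hf2e with h' | h'
          · exact absurd h'.symm hs1ne
          · exact absurd h'.symm hs2ne
      · rcases hs2e with h | h
        · subst h
          rcases hf2e with h' | h'
          · exact absurd h'.symm hs2ne
          · exact absurd h'.symm hs1ne
        · exact h.symm
  have hmaps : ∀ s ∈ S, f s ∈ T := by
    intro s hs
    obtain ⟨e, -, -, -, h⟩ := key s hs
    exact h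
  have hcard : S.card ≤ T.card := Finset.card_le_card_of_injOn f hmaps hinj
  have hScard : S.card = ((Icc 1 n).filter (fun m => m % 2 = 1 ∧ n < 2 * m)).card := by
    refine Finset.card_bij (fun v _ => (v : ℕ)) ?_ ?_ ?_
    · intro v hv
      rw [hSdef, mem_filter] at hv
      rw [mem_filter]
      exact ⟨v.2, hv.2⟩
    · intro a ha b hb h
      exact Subtype.ext h
    · intro m hm
      rw [mem_filter] at hm
      exact ⟨⟨m, hm.1⟩, by rw [hSdef, mem_filter]; exact ⟨mem_univ _, hm.2⟩, rfl⟩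
  have hTcard : T.card = ((Icc 1 n).filter (fun m => m % 2 = 1 ∧ 3 * m ≤ n)).card := by
    refine Finset.card_bij (fun v _ => (v : ℕ)) ?_ ?_ ?_
    · intro v hv
      rw [hTdef, mem_filter] at hv
      rw [mem_filter]
      exact ⟨v.2, hv.2⟩
    · intro a ha b hb h
      exact Subtype.ext h
    · intro m hm
      rw [mem_filter] at hm
      exact ⟨⟨m, hm.1⟩, by rw [hTdef, mem_filter]; exact ⟨mem_univ _, hm.2⟩, rfl⟩
  have hSval : ((Icc 1 n).filter (fun m => m % 2 = 1 ∧ n < 2 * m)).card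
      = (Icc ((n+2)/4) ((n-1)/2)).card := by
    refine Finset.card_bij' (fun m _ => m / 2) (fun k _ => 2 * k + 1) ?_ ?_ ?_ ?_
    · intro m hm
      simp only [mem_filter, mem_Icc] at hm ⊢
      omega
    · intro k hk
      simp only [mem_filter, mem_Icc] at hk ⊢
      omega
    · intro m hm
      simp only [mem_filter, mem_Icc] at hm
      try dsimp only
      omega
    · intro k hk
      simp only [mem_Icc] at hk
      try dsimp only
      omega
  have hTval : ((Icc 1 n).filter (fun m => m % 2 = 1 ∧ 3 * m ≤ n)).card
      = (Icc 0 ((n-3)/6)).card := by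
    refine Finset.card_bij' (fun m _ => m / 2) (fun k _ => 2 * k + 1) ?_ ?_ ?_ ?_
    · intro m hm
      simp only [mem_filter, mem_Icc] at hm ⊢
      omega
    · intro k hk
      simp only [mem_filter, mem_Icc] at hk ⊢
      omega
    · intro m hm
      simp only [mem_filter, mem_Icc] at hm
      try dsimp only
      omega
    · intro k hk
      simp only [mem_Icc] at hk
      try dsimp only
      omega
  rw [hScard, hTcard, hSval, hTval, Nat.card_Icc, Nat.card_Icc] at hcard
  omega

/-- For all sufficiently large `n`, the vertex `1` belongs to `A(Gₙ)` in the Gallai–Edmonds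
decomposition of the divisibility graph `Gₙ`: every maximum matching covers `1`, and `1`
has a neighbor that some maximum matching fails to cover. -/
theorem one_mem_A_of_large :
    ∃ N : ℕ, ∀ n : ℕ, N ≤ n → ∀ h1 : (1 : ℕ) ∈ Finset.Icc 1 n,
      (∀ M : Finset (Sym2 {k : ℕ // k ∈ Finset.Icc 1 n}),
          IsMaximumMatching (divGraph n) M → Covers M ⟨1, h1⟩) ∧
      ∃ m : {k : ℕ // k ∈ Finset.Icc 1 n}, (divGraph n).Adj ⟨1, h1⟩ m ∧
        ∃ M : Finset (Sym2 {k : ℕ // k ∈ Finset.Icc 1 n}),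
          IsMaximumMatching (divGraph n) M ∧ ¬ Covers M m := by
  refine ⟨100, fun n hn h1 => ⟨?_, ?_⟩⟩
  · intro M hMmax
    by_contra hnc
    obtain ⟨s, hodd, hbig, hsunc⟩ := exists_uncovered hn M hMmax.1
    have hs1 : (s : ℕ) ≠ 1 := by omega
    have hadj : (divGraph n).Adj ⟨1, h1⟩ s := by
      rw [divGraph_adj]
      exact ⟨fun h => hs1 (congrArg Subtype.val h).symm, Or.inl (one_dvd _)⟩
    have hnew_notin : s((⟨1, h1⟩ : {k : ℕ // k ∈ Finset.Icc 1 n}), s) ∉ M := by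
      intro hmem
      exact hnc ⟨_, hmem, Sym2.mem_mk_left _ _⟩
    have hM' : IsMatching (divGraph n) (insert s((⟨1, h1⟩ : {k : ℕ // k ∈ Finset.Icc 1 n}), s) M) := by
      constructor
      · intro e he
        rcases Finset.mem_insert.mp he with rfl | he'
        · rw [SimpleGraph.mem_edgeSet]; exact hadj
        · exact hMmax.1.1 e he'
      · intro e he f hf hnef v hv
        rcases Finset.mem_insert.mp he with rfl | he' <;>
          rcases Finset.mem_insert.mp hf with rfl | hf'
        · exact absurd rfl hnef
        · intro hvf
          rcases Sym2.mem_iff.mp hv with rfl | rfl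
          · exact hnc ⟨f, hf', hvf⟩
          · exact hsunc ⟨f, hf', hvf⟩
        · intro hvf
          rcases Sym2.mem_iff.mp hvf with rfl | rfl
          · exact hnc ⟨e, he', hv⟩
          · exact hsunc ⟨e, he', hv⟩
        · exact hMmax.1.2 e he' f hf' hnef v hv
    have hc1 := Finset.card_insert_of_notMem hnew_notin
    have hc2 := hMmax.2 _ hM'
    omega
  · obtain ⟨M, hM⟩ := exists_maximum_matching
    obtain ⟨s, hodd, hbig, hsunc⟩ := exists_uncovered hn M hM.1
    have hs1 : (s : ℕ) ≠ 1 := by omega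
    refine ⟨s, ?_, M, hM, hsunc⟩
    rw [divGraph_adj]
    exact ⟨fun h => hs1 (congrArg Subtype.val h).symm, Or.inl (one_dvd _)⟩
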